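/- arXiv:2310.06771 — 2 statements merged into one kernel-verified Lean document; each statement's English description precedes it below -/
import Mathlib

section
/- There exists a universal constant C > 0 such that for all real numbers a, b with 0 < a ≤ b ≤ 1/4, one has ∫_{−π}^{π} |1 − a − e^{iω}| / |1 − b − e^{iω}|² dω ≤ C·log(8/a). -/
open MeasureTheory Real

lemma norm_sq_aux (c ω : ℝ) :
    ‖(1 : ℂ) - (c : ℂ) - Complex.exp (Complex.I * (ω : ℂ))‖ ^ 2 =
      (1 - c - Real.cos ω) ^ 2 + (Real.sin ω) ^ 2 := by
  rw [mul_comm, Complex.sq_norm, Complex.normSq_apply]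
  simp [Complex.exp_ofReal_mul_I_re, Complex.exp_ofReal_mul_I_im]
  ring

lemma aux_num (a c s t : ℝ) (hpyth : s ^ 2 + c ^ 2 = 1) (hc : 1 - t ^ 2 / 2 ≤ c)
    (hc1 : c ≤ 1) (ha0 : 0 ≤ a) (ha1 : a ≤ 1) (ht : 0 ≤ t) :
    (1 - a - c) ^ 2 + s ^ 2 ≤ (a + t) ^ 2 := by
  nlinarith [mul_nonneg ha0 (sub_nonneg.2 hc1), mul_nonneg ha0 ht]

lemma aux_den (b c s t p : ℝ) (hpyth : s ^ 2 + c ^ 2 = 1) (hc2 : 2 * t ^ 2 ≤ p * (1 - c))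
    (hc1 : c ≤ 1) (hb0 : 0 < b) (hb : b ≤ 1 / 4) (ht : 0 ≤ t) (hp : 9 < p) :
    3 * (b + t) ^ 2 ≤ 2 * p * ((1 - b - c) ^ 2 + s ^ 2) := by
  have e1 : (1 - b - c) ^ 2 + s ^ 2 = b ^ 2 + 2 * (1 - b) * (1 - c) := by
    linear_combination hpyth
  have e2 : b ^ 2 + 3 / 2 * (1 - c) ≤ b ^ 2 + 2 * (1 - b) * (1 - c) := by
    nlinarith [mul_nonneg (show (0:ℝ) ≤ 1 / 2 - 2 * b by linarith)
      (show (0:ℝ) ≤ 1 - c by linarith)]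
  have s1 : 3 * (b + t) ^ 2 ≤ 6 * b ^ 2 + 6 * t ^ 2 := by nlinarith [sq_nonneg (b - t)]
  have s3 : 6 * b ^ 2 ≤ 2 * p * b ^ 2 := by nlinarith [mul_nonneg (show (0:ℝ) ≤ p - 9 by linarith) (sq_nonneg b)]
  have s4 : 2 * p * (b ^ 2 + 3 / 2 * (1 - c)) ≤ 2 * p * ((1 - b - c) ^ 2 + s ^ 2) := by
    rw [e1]
    exact mul_le_mul_of_nonneg_left e2 (by linarith)
  nlinarith [hc2, s1, s3, s4]

theorem exists_const_integral_ratio_le :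
    ∃ C : ℝ, 0 < C ∧ ∀ a b : ℝ, 0 < a → a ≤ b → b ≤ 1 / 4 →
      (∫ ω in Set.Icc (-π) π,
          ‖(1 : ℂ) - (a : ℂ) - Complex.exp (Complex.I * (ω : ℂ))‖ /
            ‖(1 : ℂ) - (b : ℂ) - Complex.exp (Complex.I * (ω : ℂ))‖ ^ 2)
        ≤ C * Real.log (8 / a) := by
  refine ⟨14, by norm_num, fun a b ha hab hb => ?_⟩
  have hb0 : 0 < b := lt_of_lt_of_le ha hab
  have hπ3 : (3 : ℝ) < π := Real.pi_gt_three
  have hπ315 : π < 3.15 := Real.pi_lt_d2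
  have hπ2pos : (0 : ℝ) < π ^ 2 := by positivity
  have hπ2gt : (9 : ℝ) < π ^ 2 := by nlinarith
  have hπ2lt : π ^ 2 ≤ 10.5 := by nlinarith
  set g : ℝ → ℝ := fun ω => 7 * (b + |ω|)⁻¹ with hg
  have hden : ∀ x : ℝ, b + |x| ≠ 0 := fun x => by positivity
  have hgc : Continuous g :=
    continuous_const.mul ((continuous_const.add continuous_abs).inv₀ hden)
  -- pointwise bound
  have key : ∀ ω ∈ Set.Icc (-π) π,
      ‖(1 : ℂ) - (a : ℂ) - Complex.exp (Complex.I * (ω : ℂ))‖ /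
          ‖(1 : ℂ) - (b : ℂ) - Complex.exp (Complex.I * (ω : ℂ))‖ ^ 2 ≤ g ω := by
    intro ω hω
    obtain ⟨hω1, hω2⟩ := hω
    have habs : |ω| ≤ π := abs_le.2 ⟨hω1, hω2⟩
    set N := ‖(1 : ℂ) - (a : ℂ) - Complex.exp (Complex.I * (ω : ℂ))‖ with hN
    set D := ‖(1 : ℂ) - (b : ℂ) - Complex.exp (Complex.I * (ω : ℂ))‖ with hD
    have hN2 : N ^ 2 = (1 - a - Real.cos ω) ^ 2 + (Real.sin ω) ^ 2 := norm_sq_aux a ω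
    have hD2 : D ^ 2 = (1 - b - Real.cos ω) ^ 2 + (Real.sin ω) ^ 2 := norm_sq_aux b ω
    have hpyth : Real.sin ω ^ 2 + Real.cos ω ^ 2 = 1 := Real.sin_sq_add_cos_sq ω
    have hbω : 0 < b + |ω| := by positivity
    -- cos upper bound, cleared of division
    have hcos2 : 2 * |ω| ^ 2 ≤ π ^ 2 * (1 - Real.cos ω) := by
      have h := mul_le_mul_of_nonneg_left (Real.cos_le_one_sub_mul_cos_sq habs) hπ2pos.le
      have he : π ^ 2 * (1 - 2 / π ^ 2 * ω ^ 2) = π ^ 2 - 2 * ω ^ 2 := by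
        field_simp
      rw [sq_abs]
      linarith [h, he.le, he.ge]
    have hcosub : 1 - |ω| ^ 2 / 2 ≤ Real.cos ω := by
      rw [sq_abs]; exact Real.one_sub_sq_div_two_le_cos
    -- numerator bound : N ≤ b + |ω|
    have hNle : N ≤ b + |ω| := by
      have h1 : N ^ 2 ≤ (a + |ω|) ^ 2 := by
        rw [hN2]
        exact aux_num a (Real.cos ω) (Real.sin ω) |ω| hpyth hcosub (Real.cos_le_one ω)
          ha.le (by linarith) (abs_nonneg ω)
      have h2 : N ≤ a + |ω| := by
        have h3 := Real.sqrt_le_sqrt h1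
        rwa [Real.sqrt_sq (hN ▸ norm_nonneg _), Real.sqrt_sq (by positivity)] at h3
      linarith
    -- denominator bounds
    have hDge : 3 * (b + |ω|) ^ 2 ≤ 2 * π ^ 2 * D ^ 2 := by
      rw [hD2]
      exact aux_den b (Real.cos ω) (Real.sin ω) |ω| (π ^ 2) hpyth hcos2
        (Real.cos_le_one ω) hb0 hb (abs_nonneg ω) hπ2gt
    have hDpos : 0 < D ^ 2 := by
      rcases (sq_nonneg D).eq_or_lt with h | h
      · exfalso
        rw [← h] at hDge
        nlinarith [mul_pos hbω hbω]
      · exact h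
    have h7 : (b + |ω|) * (b + |ω|) ≤ 7 * D ^ 2 := by
      have := mul_le_mul_of_nonneg_right hπ2lt (sq_nonneg D)
      nlinarith [hDge]
    have step1 : N / D ^ 2 ≤ (b + |ω|) / D ^ 2 := by gcongr
    have step2 : (b + |ω|) / D ^ 2 ≤ 7 / (b + |ω|) := by
      rw [div_le_div_iff₀ hDpos hbω]; linarith
    calc N / D ^ 2 ≤ 7 / (b + |ω|) := step1.trans step2
      _ = g ω := by rw [hg]; ring
  -- integrability of g
  have hgi : IntegrableOn g (Set.Icc (-π) π) := hgc.integrableOn_Icc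
  -- compare
  have h1 : (∫ ω in Set.Icc (-π) π,
      ‖(1 : ℂ) - (a : ℂ) - Complex.exp (Complex.I * (ω : ℂ))‖ /
        ‖(1 : ℂ) - (b : ℂ) - Complex.exp (Complex.I * (ω : ℂ))‖ ^ 2)
      ≤ ∫ ω in Set.Icc (-π) π, g ω := by
    refine integral_mono_of_nonneg (Filter.Eventually.of_forall fun ω => by positivity) hgi ?_
    exact (ae_restrict_iff' measurableSet_Icc).2 (Filter.Eventually.of_forall key)
  -- compute the integral of g
  have hπpos : (0 : ℝ) < π := Real.pi_pos
  have hInt : ∀ (u v : ℝ), IntervalIntegrable g volume u v := fun u v =>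
    hgc.intervalIntegrable u v
  have heven : ∀ x : ℝ, g (-x) = g x := fun x => by simp [hg, abs_neg]
  have hneg : (∫ x in (-π)..(0:ℝ), g x) = ∫ x in (0:ℝ)..π, g x := by
    have := intervalIntegral.integral_comp_neg (a := -π) (b := 0) g
    simp only [heven] at this
    simpa using this
  have hpos : (∫ x in (0:ℝ)..π, g x) = 7 * Real.log ((b + π) / b) := by
    have hcongr : (∫ x in (0:ℝ)..π, g x) = ∫ x in (0:ℝ)..π, 7 * (b + x)⁻¹ := by
      refine intervalIntegral.integral_congr fun x hx => ?_
      rw [Set.uIcc_of_le hπpos.le] at hx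
      rw [hg]; simp [abs_of_nonneg hx.1]
    rw [hcongr, intervalIntegral.integral_const_mul]
    have hshift : (∫ x in (0:ℝ)..π, (b + x)⁻¹) = ∫ x in (b + 0)..(b + π), x⁻¹ :=
      intervalIntegral.integral_comp_add_left (fun x => x⁻¹) b
    rw [hshift, add_zero, integral_inv_of_pos hb0 (by linarith)]
  have hsplit : (∫ ω in Set.Icc (-π) π, g ω) = 14 * Real.log ((b + π) / b) := by
    rw [MeasureTheory.integral_Icc_eq_integral_Ioc,
      ← intervalIntegral.integral_of_le (by linarith : -π ≤ π),
      ← intervalIntegral.integral_add_adjacent_intervals (hInt (-π) 0) (hInt 0 π),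
      hneg, hpos]
    ring
  -- final log comparison
  have hlog : Real.log ((b + π) / b) ≤ Real.log (8 / a) := by
    apply Real.log_le_log (by positivity)
    rw [div_le_div_iff₀ hb0 ha]
    have t1 : a * (b + π) ≤ b * (b + π) := mul_le_mul_of_nonneg_right hab (by positivity)
    have t2 : b * (b + π) ≤ b * 8 := mul_le_mul_of_nonneg_left (by linarith) hb0.le
    linarith
  calc (∫ ω in Set.Icc (-π) π,
      ‖(1 : ℂ) - (a : ℂ) - Complex.exp (Complex.I * (ω : ℂ))‖ /
        ‖(1 : ℂ) - (b : ℂ) - Complex.exp (Complex.I * (ω : ℂ))‖ ^ 2)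
      ≤ ∫ ω in Set.Icc (-π) π, g ω := h1
    _ = 14 * Real.log ((b + π) / b) := hsplit
    _ ≤ 14 * Real.log (8 / a) := by linarith
end

section
/- Let τ ∈ ℕ, let β_0, …, β_τ be real numbers, and let Q_1, …, Q_τ be real symmetric d×d matrices with 0 ≼ Q_j ≼ I for every j. Define V = Σ_{k=0}^{τ} β_{τ−k} · (Q_τ Q_{τ−1} ⋯ Q_{τ−k+1}), where the empty matrix product (k = 0) is the identity I. Then tr(V Vᵀ) ≤ d · (Σ_{k=0}^{τ} |β_k|)². -/
open Matrix
open scoped MatrixOrder in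
noncomputable def Matrix.PosSemidef.sqrt {d : ℕ} {A : Matrix (Fin d) (Fin d) ℝ}
    (_hA : A.PosSemidef) : Matrix (Fin d) (Fin d) ℝ := CFC.sqrt A

open scoped MatrixOrder in
lemma Matrix.PosSemidef.posSemidef_sqrt {d : ℕ} {A : Matrix (Fin d) (Fin d) ℝ}
    (hA : A.PosSemidef) : hA.sqrt.PosSemidef :=
  Matrix.nonneg_iff_posSemidef.mp (CFC.sqrt_nonneg A)

open scoped MatrixOrder in
lemma Matrix.PosSemidef.sqrt_mul_self {d : ℕ} {A : Matrix (Fin d) (Fin d) ℝ}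
    (hA : A.PosSemidef) : hA.sqrt * hA.sqrt = A :=
  CFC.sqrt_mul_sqrt_self A hA.nonneg

lemma psd_trace_nonneg {d : ℕ} {A : Matrix (Fin d) (Fin d) ℝ} (hA : A.PosSemidef) :
    0 ≤ A.trace := by
  rw [Matrix.trace]
  apply Finset.sum_nonneg
  intro i _
  have h := hA.dotProduct_mulVec_nonneg (Pi.single i 1)
  simpa [dotProduct, Matrix.mulVec, Pi.single_apply, Finset.sum_ite_eq,
    Matrix.diag] using h

lemma trace_mul_psd_nonneg {d : ℕ} {A B : Matrix (Fin d) (Fin d) ℝ}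
    (hA : A.PosSemidef) (hB : B.PosSemidef) : 0 ≤ (A * B).trace := by
  have hS := hA.posSemidef_sqrt
  have hAe : hA.sqrt * hA.sqrt = A := hA.sqrt_mul_self
  have h1 : A * B = hA.sqrt * (hA.sqrt * B) := by rw [← Matrix.mul_assoc, hAe]
  rw [h1, Matrix.trace_mul_comm]
  have h2 : (hA.sqrt * B * hA.sqrt).PosSemidef := by
    have h3 := hB.mul_mul_conjTranspose_same hA.sqrt
    rwa [hS.1] at h3
  exact psd_trace_nonneg h2

lemma one_sub_sq_psd {d : ℕ} {G : Matrix (Fin d) (Fin d) ℝ}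
    (hG : G.PosSemidef) (hG1 : ((1 : Matrix (Fin d) (Fin d) ℝ) - G).PosSemidef) :
    ((1 : Matrix (Fin d) (Fin d) ℝ) - G * G).PosSemidef := by
  have hS := hG.posSemidef_sqrt
  have hGe : hG.sqrt * hG.sqrt = G := hG.sqrt_mul_self
  have h2 : (hG.sqrt * (1 - G) * hG.sqrt).PosSemidef := by
    have h3 := hG1.mul_mul_conjTranspose_same hG.sqrt
    rwa [hS.1] at h3
  have key : (1 : Matrix (Fin d) (Fin d) ℝ) - G * G
      = (1 - G) + hG.sqrt * (1 - G) * hG.sqrt := by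
    have haux : ∀ S : Matrix (Fin d) (Fin d) ℝ, S * S = G →
        S * (1 - G) * S = G - G * G := by
      intro S h
      rw [← h]
      noncomm_ring
    rw [haux _ hGe]; noncomm_ring
  rw [key]
  exact hG1.add h2

lemma trace_mul_t {d : ℕ} (A B : Matrix (Fin d) (Fin d) ℝ) :
    (A * Bᵀ).trace = ∑ p : Fin d × Fin d, A p.1 p.2 * B p.1 p.2 := by
  rw [Fintype.sum_prod_type]
  simp [Matrix.trace, Matrix.mul_apply, Matrix.diag, Matrix.transpose_apply]

lemma trace_AAt_nonneg {d : ℕ} (A : Matrix (Fin d) (Fin d) ℝ) :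
    0 ≤ (A * Aᵀ).trace := by
  rw [trace_mul_t]
  exact Finset.sum_nonneg fun p _ => mul_self_nonneg _

lemma trace_cross_abs_le {d : ℕ} {A B : Matrix (Fin d) (Fin d) ℝ} {c : ℝ}
    (hA : (A * Aᵀ).trace ≤ c) (hB : (B * Bᵀ).trace ≤ c) :
    |(A * Bᵀ).trace| ≤ c := by
  have hc : 0 ≤ c := le_trans (trace_AAt_nonneg A) hA
  have hcs := Finset.sum_mul_sq_le_sq_mul_sq Finset.univ
    (fun p : Fin d × Fin d => A p.1 p.2) (fun p => B p.1 p.2)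
  have h1 : ((A * Bᵀ).trace) ^ 2 ≤ (A * Aᵀ).trace * (B * Bᵀ).trace := by
    rw [trace_mul_t, trace_mul_t, trace_mul_t]
    simpa [sq] using hcs
  have h2 : ((A * Bᵀ).trace) ^ 2 ≤ c ^ 2 := by
    calc ((A * Bᵀ).trace) ^ 2 ≤ (A * Aᵀ).trace * (B * Bᵀ).trace := h1
      _ ≤ c ^ 2 := by
          have := trace_AAt_nonneg A
          have := trace_AAt_nonneg B
          nlinarith
  nlinarith [abs_nonneg ((A * Bᵀ).trace), sq_abs ((A * Bᵀ).trace),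
    sq_nonneg (|(A * Bᵀ).trace| - c), sq_nonneg (|(A * Bᵀ).trace| + c)]

lemma prod_trace_le (d τ : ℕ) (Q : ℕ → Matrix (Fin d) (Fin d) ℝ)
    (hQ : ∀ j, 1 ≤ j → j ≤ τ →
      (Q j).PosSemidef ∧ ((1 : Matrix (Fin d) (Fin d) ℝ) - Q j).PosSemidef) :
    ∀ k, k ≤ τ →
      ((((List.range k).map fun j => Q (τ - j)).prod *
        (((List.range k).map fun j => Q (τ - j)).prod)ᵀ).trace : ℝ) ≤ d := by
  intro k
  induction k with
  | zero => intro _; simp [Matrix.trace_one]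
  | succ k ih =>
    intro hk
    have hk' : k ≤ τ := by omega
    set P : Matrix (Fin d) (Fin d) ℝ := (((List.range k).map fun j => Q (τ - j)).prod) with hP
    have hsplit : (((List.range (k+1)).map fun j => Q (τ - j)).prod) = P * Q (τ - k) := by
      rw [List.range_succ, List.map_append, List.prod_append]
      simp [hP]
    rw [hsplit]
    obtain ⟨hG, hG1⟩ := hQ (τ - k) (by omega) (by omega)
    set G := Q (τ - k) with hGdef
    have hGsym : Gᵀ = G := by
      have := hG.1
      rwa [Matrix.IsHermitian, Matrix.conjTranspose_eq_transpose_of_trivial] at this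
    have h1 : ((P * G) * (P * G)ᵀ).trace = ((Pᵀ * P) * (G * G)).trace := by
      rw [Matrix.transpose_mul, hGsym]
      rw [show P * G * (G * Pᵀ) = (P * (G * G)) * Pᵀ by noncomm_ring]
      rw [Matrix.trace_mul_comm, Matrix.mul_assoc]
    have hX : (Pᵀ * P).PosSemidef := by
      have := Matrix.posSemidef_conjTranspose_mul_self P
      rwa [Matrix.conjTranspose_eq_transpose_of_trivial] at this
    have h2 : 0 ≤ ((Pᵀ * P) * (1 - G * G)).trace :=
      trace_mul_psd_nonneg hX (one_sub_sq_psd hG hG1)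
    have h3 : ((Pᵀ * P) * (1 - G * G)).trace
        = (Pᵀ * P).trace - ((Pᵀ * P) * (G * G)).trace := by
      rw [Matrix.mul_sub, Matrix.mul_one, Matrix.trace_sub]
    have h4 : (Pᵀ * P).trace = (P * Pᵀ).trace := Matrix.trace_mul_comm _ _
    have h5 := ih hk'
    rw [h1]
    rw [h3] at h2
    rw [h4] at h2
    linarith [h2, h5]

theorem trace_V_Vt_le (d τ : ℕ) (β : ℕ → ℝ) (Q : ℕ → Matrix (Fin d) (Fin d) ℝ)
    (hQ : ∀ j, 1 ≤ j → j ≤ τ →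
      (Q j).PosSemidef ∧ ((1 : Matrix (Fin d) (Fin d) ℝ) - Q j).PosSemidef) :
    Matrix.trace
        ((∑ k ∈ Finset.range (τ + 1),
            β (τ - k) • (((List.range k).map fun j => Q (τ - j))).prod) *
          (∑ k ∈ Finset.range (τ + 1),
            β (τ - k) • (((List.range k).map fun j => Q (τ - j))).prod)ᵀ)
      ≤ (d : ℝ) * (∑ k ∈ Finset.range (τ + 1), |β k|) ^ 2 := by
  set A : ℕ → Matrix (Fin d) (Fin d) ℝ :=
    fun k => (((List.range k).map fun j => Q (τ - j))).prod with hA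
  set c : ℕ → ℝ := fun k => β (τ - k) with hc
  have expand : Matrix.trace
      ((∑ k ∈ Finset.range (τ + 1), c k • A k) *
        (∑ k ∈ Finset.range (τ + 1), c k • A k)ᵀ)
      = ∑ k ∈ Finset.range (τ + 1), ∑ l ∈ Finset.range (τ + 1),
          (c k * c l) * Matrix.trace (A k * (A l)ᵀ) := by
    rw [Matrix.transpose_sum, Finset.sum_mul_sum]
    rw [Matrix.trace_sum]
    refine Finset.sum_congr rfl fun k _ => ?_
    rw [Matrix.trace_sum]
    refine Finset.sum_congr rfl fun l _ => ?_
    rw [Matrix.transpose_smul, Matrix.smul_mul, Matrix.mul_smul, smul_smul,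
      Matrix.trace_smul, smul_eq_mul]
  rw [expand]
  have hbound : ∀ k ∈ Finset.range (τ + 1), ∀ l ∈ Finset.range (τ + 1),
      (c k * c l) * Matrix.trace (A k * (A l)ᵀ) ≤ |c k| * |c l| * d := by
    intro k hk l hl
    have hk' : k ≤ τ := by simpa using Nat.lt_succ_iff.mp (Finset.mem_range.mp hk)
    have hl' : l ≤ τ := by simpa using Nat.lt_succ_iff.mp (Finset.mem_range.mp hl)
    have habs : |Matrix.trace (A k * (A l)ᵀ)| ≤ (d : ℝ) :=
      trace_cross_abs_le (prod_trace_le d τ Q hQ k hk') (prod_trace_le d τ Q hQ l hl')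
    calc (c k * c l) * Matrix.trace (A k * (A l)ᵀ)
        ≤ |(c k * c l) * Matrix.trace (A k * (A l)ᵀ)| := le_abs_self _
      _ = |c k| * |c l| * |Matrix.trace (A k * (A l)ᵀ)| := by
          rw [abs_mul, abs_mul]
      _ ≤ |c k| * |c l| * d := by
          apply mul_le_mul_of_nonneg_left habs
          positivity
  have step1 : ∑ k ∈ Finset.range (τ + 1), ∑ l ∈ Finset.range (τ + 1),
      (c k * c l) * Matrix.trace (A k * (A l)ᵀ)
      ≤ ∑ k ∈ Finset.range (τ + 1), ∑ l ∈ Finset.range (τ + 1),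
        |c k| * |c l| * d := by
    refine Finset.sum_le_sum fun k hk => Finset.sum_le_sum fun l hl => hbound k hk l hl
  refine le_trans step1 (le_of_eq ?_)
  have hreflect : ∑ k ∈ Finset.range (τ + 1), |c k|
      = ∑ k ∈ Finset.range (τ + 1), |β k| := by
    have := Finset.sum_range_reflect (fun k => |β k|) (τ + 1)
    simpa [hc] using this
  rw [← hreflect, sq, Finset.sum_mul_sum]
  rw [Finset.mul_sum]
  refine Finset.sum_congr rfl fun k _ => ?_
  rw [Finset.mul_sum]
  refine Finset.sum_congr rfl fun l _ => ?_
  ring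
end
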